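/- Let C be the middle-third Cantor set. Then {1/x₁ + 1/x₂ + 1/x₃ + 1/x₄ : x₁ ∈ C ∩ [6/27, 7/27], x₂ ∈ C ∩ [8/27, 1/3], x₃, x₄ ∈ C ∩ [2/3, 1]} ⊇ [62/7, 10]. -/
import Mathlib

open Set Filter Topology

lemma third_mem_cantorSet {x : ℝ} (hx : x ∈ cantorSet) : x / 3 ∈ cantorSet := by
  rw [cantorSet, Set.mem_iInter] at *
  intro n
  cases n with
  | zero =>
    have := cantorSet_subset_unitInterval (by rw [cantorSet, Set.mem_iInter]; exact hx)
    simp only [preCantorSet_zero, Set.mem_Icc] at *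
    constructor <;> nlinarith [this.1, this.2]
  | succ n => exact Or.inl ⟨x, hx n, rfl⟩

lemma third_add_mem_cantorSet {x : ℝ} (hx : x ∈ cantorSet) : (x + 2) / 3 ∈ cantorSet := by
  rw [cantorSet, Set.mem_iInter] at *
  intro n
  cases n with
  | zero =>
    have := cantorSet_subset_unitInterval (by rw [cantorSet, Set.mem_iInter]; exact hx)
    simp only [preCantorSet_zero, Set.mem_Icc] at *
    constructor <;> nlinarith [this.1, this.2]
  | succ n => exact Or.inr ⟨x, hx n, by ring⟩

lemma one_mem_cantorSet' : (1:ℝ) ∈ cantorSet := by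
  rw [cantorSet, Set.mem_iInter]
  intro n
  induction n with
  | zero => simp [preCantorSet]
  | succ n ih => exact Or.inr ⟨1, ih, by norm_num⟩

/-- `x + ℓ • cantorSet ⊆ cantorSet` -/
def Piece (ℓ x : ℝ) : Prop := ∀ u ∈ cantorSet, x + ℓ * u ∈ cantorSet

lemma Piece.mem {ℓ x : ℝ} (h : Piece ℓ x) : x ∈ cantorSet := by
  simpa using h 0 zero_mem_cantorSet

lemma Piece.mem_top {ℓ x : ℝ} (h : Piece ℓ x) : x + ℓ ∈ cantorSet := by
  simpa using h 1 one_mem_cantorSet'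

lemma Piece.lb {ℓ x : ℝ} (h : Piece ℓ x) : 0 ≤ x :=
  (cantorSet_subset_unitInterval h.mem).1

lemma Piece.ub {ℓ x : ℝ} (h : Piece ℓ x) : x + ℓ ≤ 1 :=
  (cantorSet_subset_unitInterval h.mem_top).2

lemma Piece.left {ℓ x : ℝ} (h : Piece ℓ x) : Piece (ℓ/3) x := by
  intro u hu
  have := h (u/3) (third_mem_cantorSet hu)
  convert this using 2
  ring

lemma Piece.right {ℓ x : ℝ} (h : Piece ℓ x) : Piece (ℓ/3) (x + 2*ℓ/3) := by
  intro u hu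
  have := h ((u+2)/3) (third_add_mem_cantorSet hu)
  convert this using 1
  ring

lemma diff_le (K p δ c : ℝ) (hK : 0 ≤ K) (hp : 0 ≤ p) (hδ : 0 ≤ δ) (hc : 0 < c) :
    K/(p+c) - K/(p+c+δ) ≤ K*δ/c^2 := by
  have h1 : 0 < p + c := by linarith
  have h2 : 0 < p + c + δ := by linarith
  rw [div_sub_div _ _ (ne_of_gt h1) (ne_of_gt h2), div_le_div_iff₀ (by positivity) (by positivity)]
  ring_nf
  nlinarith [mul_nonneg (mul_nonneg hK hδ) hp, mul_nonneg (mul_nonneg (mul_nonneg hK hδ) hp) hp,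
    mul_nonneg (mul_nonneg (mul_nonneg hK hδ) hp) hc.le, mul_nonneg (mul_nonneg hK hδ) hδ,
    mul_nonneg (mul_nonneg (mul_nonneg hK hδ) hδ) hp]

lemma le_diff (K p δ c hi : ℝ) (hK : 0 ≤ K) (hp : 0 ≤ p) (hδ : 0 ≤ δ) (hc : 0 < c)
    (hhi : p + c + δ ≤ hi) : K*δ/hi^2 ≤ K/(p+c) - K/(p+c+δ) := by
  have h1 : 0 < p + c := by linarith
  have h2 : 0 < p + c + δ := by linarith
  have hhi' : 0 < hi := lt_of_lt_of_le h2 hhi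
  rw [div_sub_div _ _ (ne_of_gt h1) (ne_of_gt h2), div_le_div_iff₀ (by positivity) (by positivity)]
  have h3 : (p+c)*(p+c+δ) ≤ hi*hi :=
    mul_le_mul (by linarith) (by linarith) h2.le hhi'.le
  nlinarith [mul_le_mul_of_nonneg_left h3 (mul_nonneg hK hδ)]



noncomputable def F (a b c d : ℝ) : ℝ := 27/(a+6) + 27/(b+8) + 3/(c+2) + 3/(d+2)

section
variable {y a b c d ℓ : ℝ}

lemma coverA (ha : 0 ≤ a) (hb : 0 ≤ b) (hc : 0 ≤ c) (hd : 0 ≤ d)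
    (hb1 : b + ℓ ≤ 1) (hc1 : c + ℓ ≤ 1) (hd1 : d + ℓ ≤ 1) (hl : 0 < ℓ) :
    F (a+ℓ/3) (b+ℓ) (c+ℓ) (d+ℓ) ≤ F (a+2*ℓ/3) b c d := by
  have g : 27/((a+ℓ/3)+6) - 27/((a+ℓ/3)+6+(ℓ/3)) ≤ 27*(ℓ/3)/6^2 :=
    diff_le 27 (a+ℓ/3) (ℓ/3) 6 (by norm_num) (by linarith) (by linarith) (by norm_num)
  rw [show (a+ℓ/3)+6+(ℓ/3) = (a+2*ℓ/3)+6 by ring] at g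
  have wb : 27*ℓ/9^2 ≤ 27/(b+8) - 27/(b+8+ℓ) :=
    le_diff 27 b ℓ 8 9 (by norm_num) hb hl.le (by norm_num) (by linarith)
  rw [show b+8+ℓ = (b+ℓ)+8 by ring] at wb
  have wc : 3*ℓ/3^2 ≤ 3/(c+2) - 3/(c+2+ℓ) :=
    le_diff 3 c ℓ 2 3 (by norm_num) hc hl.le (by norm_num) (by linarith)
  rw [show c+2+ℓ = (c+ℓ)+2 by ring] at wc
  have wd : 3*ℓ/3^2 ≤ 3/(d+2) - 3/(d+2+ℓ) :=
    le_diff 3 d ℓ 2 3 (by norm_num) hd hl.le (by norm_num) (by linarith)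
  rw [show d+2+ℓ = (d+ℓ)+2 by ring] at wd
  simp only [F]
  linarith

lemma coverB (ha : 0 ≤ a) (hb : 0 ≤ b) (hc : 0 ≤ c) (hd : 0 ≤ d)
    (ha1 : a + ℓ/3 ≤ 1) (hc1 : c + ℓ ≤ 1) (hd1 : d + ℓ ≤ 1) (hl : 0 < ℓ) :
    F (a+ℓ/3) (b+ℓ/3) (c+ℓ) (d+ℓ) ≤ F a (b+2*ℓ/3) c d := by
  have g : 27/((b+ℓ/3)+8) - 27/((b+ℓ/3)+8+(ℓ/3)) ≤ 27*(ℓ/3)/8^2 :=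
    diff_le 27 (b+ℓ/3) (ℓ/3) 8 (by norm_num) (by linarith) (by linarith) (by norm_num)
  rw [show (b+ℓ/3)+8+(ℓ/3) = (b+2*ℓ/3)+8 by ring] at g
  have wa : 27*(ℓ/3)/7^2 ≤ 27/(a+6) - 27/(a+6+ℓ/3) :=
    le_diff 27 a (ℓ/3) 6 7 (by norm_num) ha (by linarith) (by norm_num) (by linarith)
  rw [show a+6+ℓ/3 = (a+ℓ/3)+6 by ring] at wa
  have wc : 3*ℓ/3^2 ≤ 3/(c+2) - 3/(c+2+ℓ) :=
    le_diff 3 c ℓ 2 3 (by norm_num) hc hl.le (by norm_num) (by linarith)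
  rw [show c+2+ℓ = (c+ℓ)+2 by ring] at wc
  have wd : 3*ℓ/3^2 ≤ 3/(d+2) - 3/(d+2+ℓ) :=
    le_diff 3 d ℓ 2 3 (by norm_num) hd hl.le (by norm_num) (by linarith)
  rw [show d+2+ℓ = (d+ℓ)+2 by ring] at wd
  simp only [F]
  linarith

lemma coverC (ha : 0 ≤ a) (hb : 0 ≤ b) (hc : 0 ≤ c) (hd : 0 ≤ d)
    (ha1 : a + ℓ/3 ≤ 1) (hb1 : b + ℓ/3 ≤ 1) (hd1 : d + ℓ ≤ 1) (hl : 0 < ℓ) :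
    F (a+ℓ/3) (b+ℓ/3) (c+ℓ/3) (d+ℓ) ≤ F a b (c+2*ℓ/3) d := by
  have g : 3/((c+ℓ/3)+2) - 3/((c+ℓ/3)+2+(ℓ/3)) ≤ 3*(ℓ/3)/2^2 :=
    diff_le 3 (c+ℓ/3) (ℓ/3) 2 (by norm_num) (by linarith) (by linarith) (by norm_num)
  rw [show (c+ℓ/3)+2+(ℓ/3) = (c+2*ℓ/3)+2 by ring] at g
  have wa : 27*(ℓ/3)/7^2 ≤ 27/(a+6) - 27/(a+6+ℓ/3) :=
    le_diff 27 a (ℓ/3) 6 7 (by norm_num) ha (by linarith) (by norm_num) (by linarith)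
  rw [show a+6+ℓ/3 = (a+ℓ/3)+6 by ring] at wa
  have wb : 27*(ℓ/3)/9^2 ≤ 27/(b+8) - 27/(b+8+ℓ/3) :=
    le_diff 27 b (ℓ/3) 8 9 (by norm_num) hb (by linarith) (by norm_num) (by linarith)
  rw [show b+8+ℓ/3 = (b+ℓ/3)+8 by ring] at wb
  have wd : 3*ℓ/3^2 ≤ 3/(d+2) - 3/(d+2+ℓ) :=
    le_diff 3 d ℓ 2 3 (by norm_num) hd hl.le (by norm_num) (by linarith)
  rw [show d+2+ℓ = (d+ℓ)+2 by ring] at wd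
  simp only [F]
  linarith

lemma coverD (ha : 0 ≤ a) (hb : 0 ≤ b) (hc : 0 ≤ c) (hd : 0 ≤ d)
    (ha1 : a + ℓ/3 ≤ 1) (hb1 : b + ℓ/3 ≤ 1) (hc1 : c + ℓ/3 ≤ 1) (hl : 0 < ℓ) :
    F (a+ℓ/3) (b+ℓ/3) (c+ℓ/3) (d+ℓ/3) ≤ F a b c (d+2*ℓ/3) := by
  have g : 3/((d+ℓ/3)+2) - 3/((d+ℓ/3)+2+(ℓ/3)) ≤ 3*(ℓ/3)/2^2 :=
    diff_le 3 (d+ℓ/3) (ℓ/3) 2 (by norm_num) (by linarith) (by linarith) (by norm_num)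
  rw [show (d+ℓ/3)+2+(ℓ/3) = (d+2*ℓ/3)+2 by ring] at g
  have wa : 27*(ℓ/3)/7^2 ≤ 27/(a+6) - 27/(a+6+ℓ/3) :=
    le_diff 27 a (ℓ/3) 6 7 (by norm_num) ha (by linarith) (by norm_num) (by linarith)
  rw [show a+6+ℓ/3 = (a+ℓ/3)+6 by ring] at wa
  have wb : 27*(ℓ/3)/9^2 ≤ 27/(b+8) - 27/(b+8+ℓ/3) :=
    le_diff 27 b (ℓ/3) 8 9 (by norm_num) hb (by linarith) (by norm_num) (by linarith)
  rw [show b+8+ℓ/3 = (b+ℓ/3)+8 by ring] at wb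
  have wc : 3*(ℓ/3)/3^2 ≤ 3/(c+2) - 3/(c+2+ℓ/3) :=
    le_diff 3 c (ℓ/3) 2 3 (by norm_num) hc (by linarith) (by norm_num) (by linarith)
  rw [show c+2+ℓ/3 = (c+ℓ/3)+2 by ring] at wc
  simp only [F]
  linarith

lemma Fwidth (ha : 0 ≤ a) (hb : 0 ≤ b) (hc : 0 ≤ c) (hd : 0 ≤ d) (hl : 0 ≤ ℓ) :
    F a b c d - F (a+ℓ) (b+ℓ) (c+ℓ) (d+ℓ) ≤ 3*ℓ := by
  have wa : 27/(a+6) - 27/(a+6+ℓ) ≤ 27*ℓ/6^2 :=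
    diff_le 27 a ℓ 6 (by norm_num) ha hl (by norm_num)
  rw [show a+6+ℓ = (a+ℓ)+6 by ring] at wa
  have wb : 27/(b+8) - 27/(b+8+ℓ) ≤ 27*ℓ/8^2 :=
    diff_le 27 b ℓ 8 (by norm_num) hb hl (by norm_num)
  rw [show b+8+ℓ = (b+ℓ)+8 by ring] at wb
  have wc : 3/(c+2) - 3/(c+2+ℓ) ≤ 3*ℓ/2^2 :=
    diff_le 3 c ℓ 2 (by norm_num) hc hl (by norm_num)
  rw [show c+2+ℓ = (c+ℓ)+2 by ring] at wc
  have wd : 3/(d+2) - 3/(d+2+ℓ) ≤ 3*ℓ/2^2 :=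
    diff_le 3 d ℓ 2 (by norm_num) hd hl (by norm_num)
  rw [show d+2+ℓ = (d+ℓ)+2 by ring] at wd
  simp only [F]
  linarith

end



section
variable {y a b c d ℓ : ℝ}

lemma round_step (hl : 0 < ℓ) (pa : Piece ℓ a) (pb : Piece ℓ b) (pc : Piece ℓ c)
    (pd : Piece ℓ d) (hlo : F (a+ℓ) (b+ℓ) (c+ℓ) (d+ℓ) ≤ y) (hhi : y ≤ F a b c d) :
    ∃ a' b' c' d', Piece (ℓ/3) a' ∧ Piece (ℓ/3) b' ∧ Piece (ℓ/3) c' ∧ Piece (ℓ/3) d' ∧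
      a ≤ a' ∧ a' ≤ a + ℓ ∧ b ≤ b' ∧ b' ≤ b + ℓ ∧ c ≤ c' ∧ c' ≤ c + ℓ ∧ d ≤ d' ∧ d' ≤ d + ℓ ∧
      F (a'+ℓ/3) (b'+ℓ/3) (c'+ℓ/3) (d'+ℓ/3) ≤ y ∧ y ≤ F a' b' c' d' := by
  have ha0 := pa.lb; have ha1 := pa.ub
  have hb0 := pb.lb; have hb1 := pb.ub
  have hc0 := pc.lb; have hc1 := pc.ub
  have hd0 := pd.lb; have hd1 := pd.ub
  -- step A
  obtain ⟨a', pa', haL, haR, alo, ahi⟩ :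
      ∃ a', Piece (ℓ/3) a' ∧ a ≤ a' ∧ a' ≤ a + 2*ℓ/3 ∧
        F (a'+ℓ/3) (b+ℓ) (c+ℓ) (d+ℓ) ≤ y ∧ y ≤ F a' b c d := by
    by_cases h : y ≤ F (a+2*ℓ/3) b c d
    · refine ⟨a+2*ℓ/3, pa.right, by linarith, le_refl _, ?_, h⟩
      rw [show a+2*ℓ/3+ℓ/3 = a+ℓ by ring]; exact hlo
    · exact ⟨a, pa.left, le_refl _, by linarith,
        le_trans (coverA ha0 hb0 hc0 hd0 hb1 hc1 hd1 hl) (le_of_not_ge h), hhi⟩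
  have ha'0 := pa'.lb
  have ha'1 : a' + ℓ/3 ≤ 1 := pa'.ub
  -- step B
  obtain ⟨b', pb', hbL, hbR, blo, bhi⟩ :
      ∃ b', Piece (ℓ/3) b' ∧ b ≤ b' ∧ b' ≤ b + 2*ℓ/3 ∧
        F (a'+ℓ/3) (b'+ℓ/3) (c+ℓ) (d+ℓ) ≤ y ∧ y ≤ F a' b' c d := by
    by_cases h : y ≤ F a' (b+2*ℓ/3) c d
    · refine ⟨b+2*ℓ/3, pb.right, by linarith, le_refl _, ?_, h⟩
      rw [show b+2*ℓ/3+ℓ/3 = b+ℓ by ring]; exact alo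
    · exact ⟨b, pb.left, le_refl _, by linarith,
        le_trans (coverB ha'0 hb0 hc0 hd0 ha'1 hc1 hd1 hl) (le_of_not_ge h), ahi⟩
  have hb'0 := pb'.lb
  have hb'1 : b' + ℓ/3 ≤ 1 := pb'.ub
  -- step C
  obtain ⟨c', pc', hcL, hcR, clo, chi⟩ :
      ∃ c', Piece (ℓ/3) c' ∧ c ≤ c' ∧ c' ≤ c + 2*ℓ/3 ∧
        F (a'+ℓ/3) (b'+ℓ/3) (c'+ℓ/3) (d+ℓ) ≤ y ∧ y ≤ F a' b' c' d := by
    by_cases h : y ≤ F a' b' (c+2*ℓ/3) d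
    · refine ⟨c+2*ℓ/3, pc.right, by linarith, le_refl _, ?_, h⟩
      rw [show c+2*ℓ/3+ℓ/3 = c+ℓ by ring]; exact blo
    · exact ⟨c, pc.left, le_refl _, by linarith,
        le_trans (coverC ha'0 hb'0 hc0 hd0 ha'1 hb'1 hd1 hl) (le_of_not_ge h), bhi⟩
  have hc'0 := pc'.lb
  have hc'1 : c' + ℓ/3 ≤ 1 := pc'.ub
  -- step D
  obtain ⟨d', pd', hdL, hdR, dlo, dhi⟩ :
      ∃ d', Piece (ℓ/3) d' ∧ d ≤ d' ∧ d' ≤ d + 2*ℓ/3 ∧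
        F (a'+ℓ/3) (b'+ℓ/3) (c'+ℓ/3) (d'+ℓ/3) ≤ y ∧ y ≤ F a' b' c' d' := by
    by_cases h : y ≤ F a' b' c' (d+2*ℓ/3)
    · refine ⟨d+2*ℓ/3, pd.right, by linarith, le_refl _, ?_, h⟩
      rw [show d+2*ℓ/3+ℓ/3 = d+ℓ by ring]; exact clo
    · exact ⟨d, pd.left, le_refl _, by linarith,
        le_trans (coverD ha'0 hb'0 hc'0 hd0 ha'1 hb'1 hc'1 hl) (le_of_not_ge h), chi⟩
  exact ⟨a', b', c', d', pa', pb', pc', pd', haL, by linarith, hbL, by linarith,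
    hcL, by linarith, hdL, by linarith, dlo, dhi⟩
end

open Filter Topology



section
variable {y a b c d ℓ : ℝ}

end

lemma exists_F_eq {y : ℝ} (hy : y ∈ Set.Icc (62/7 : ℝ) 10) :
    ∃ A ∈ cantorSet, ∃ B ∈ cantorSet, ∃ C ∈ cantorSet, ∃ D ∈ cantorSet,
      y = F A B C D := by
  set ℓ : ℕ → ℝ := fun n => (1/3 : ℝ)^n with hℓ
  set P : ℕ → ℝ×ℝ×ℝ×ℝ → Prop := fun n p =>
    Piece (ℓ n) p.1 ∧ Piece (ℓ n) p.2.1 ∧ Piece (ℓ n) p.2.2.1 ∧ Piece (ℓ n) p.2.2.2 ∧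
    F (p.1 + ℓ n) (p.2.1 + ℓ n) (p.2.2.1 + ℓ n) (p.2.2.2 + ℓ n) ≤ y ∧
    y ≤ F p.1 p.2.1 p.2.2.1 p.2.2.2 with hP
  have hl3 : ∀ n : ℕ, ℓ n / 3 = ℓ (n+1) := by
    intro n; simp only [hℓ, pow_succ]; ring
  have hlpos : ∀ n : ℕ, 0 < ℓ n := fun n => by positivity
  have step : ∀ n (p : ℝ×ℝ×ℝ×ℝ), P n p → ∃ q : ℝ×ℝ×ℝ×ℝ, P (n+1) q ∧
      p.1 ≤ q.1 ∧ q.1 ≤ p.1 + ℓ n ∧ p.2.1 ≤ q.2.1 ∧ q.2.1 ≤ p.2.1 + ℓ n ∧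
      p.2.2.1 ≤ q.2.2.1 ∧ q.2.2.1 ≤ p.2.2.1 + ℓ n ∧
      p.2.2.2 ≤ q.2.2.2 ∧ q.2.2.2 ≤ p.2.2.2 + ℓ n := by
    rintro n ⟨a, b, c, d⟩ ⟨pa, pb, pc, pd, hlo, hhi⟩
    obtain ⟨a', b', c', d', pa', pb', pc', pd', h1, h2, h3, h4, h5, h6, h7, h8, hlo', hhi'⟩ :=
      round_step (hlpos n) pa pb pc pd hlo hhi
    rw [hl3 n] at pa' pb' pc' pd' hlo'
    exact ⟨(a', b', c', d'), ⟨pa', pb', pc', pd', hlo', hhi'⟩,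
      h1, h2, h3, h4, h5, h6, h7, h8⟩
  choose g hg1 hg2 using step
  have h0 : P 0 (0, 0, 0, 0) := by
    have hp1 : Piece (ℓ 0) 0 := by
      intro u hu
      simpa [hℓ] using hu
    refine ⟨hp1, hp1, hp1, hp1, ?_, ?_⟩ <;>
      · simp only [hℓ, pow_zero, F]
        norm_num
        linarith [hy.1, hy.2]
  let s : ∀ n : ℕ, {p : ℝ×ℝ×ℝ×ℝ // P n p} :=
    fun n => Nat.rec ⟨(0,0,0,0), h0⟩ (fun k ih => ⟨g k ih.1 ih.2, hg1 k ih.1 ih.2⟩) n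
  set A : ℕ → ℝ := fun n => (s n).1.1 with hA
  set B : ℕ → ℝ := fun n => (s n).1.2.1 with hB
  set C : ℕ → ℝ := fun n => (s n).1.2.2.1 with hC
  set D : ℕ → ℝ := fun n => (s n).1.2.2.2 with hD
  have hrel : ∀ n, A n ≤ A (n+1) ∧ A (n+1) ≤ A n + ℓ n ∧ B n ≤ B (n+1) ∧ B (n+1) ≤ B n + ℓ n ∧
      C n ≤ C (n+1) ∧ C (n+1) ≤ C n + ℓ n ∧ D n ≤ D (n+1) ∧ D (n+1) ≤ D n + ℓ n :=
    fun n => hg2 n (s n).1 (s n).2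
  have hPn : ∀ n, P n (A n, B n, C n, D n) := fun n => (s n).2
  -- Cauchy sequences
  have key : ∀ f : ℕ → ℝ, (∀ n, f n ≤ f (n+1) ∧ f (n+1) ≤ f n + ℓ n) →
      (∀ n, f n ∈ cantorSet) → ∃ L ∈ cantorSet, Tendsto f atTop (𝓝 L) := by
    intro f hf hmem
    have hcau : CauchySeq f := by
      apply cauchySeq_of_le_geometric (1/3 : ℝ) 1 (by norm_num)
      intro n
      rw [Real.dist_eq, abs_le]
      constructor
      · linarith [(hf n).2, hlpos n]
      · have : ℓ n = 1 * (1/3)^n := by rw [hℓ]; ring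
        linarith [(hf n).1, this ▸ (hf n).2]
    obtain ⟨L, hL⟩ := cauchySeq_tendsto_of_complete hcau
    exact ⟨L, isClosed_cantorSet.mem_of_tendsto hL (Eventually.of_forall hmem), hL⟩
  obtain ⟨LA, hLAm, hLA⟩ := key A (fun n => ⟨(hrel n).1, (hrel n).2.1⟩)
    (fun n => (hPn n).1.mem)
  obtain ⟨LB, hLBm, hLB⟩ := key B (fun n => ⟨(hrel n).2.2.1, (hrel n).2.2.2.1⟩)
    (fun n => (hPn n).2.1.mem)
  obtain ⟨LC, hLCm, hLC⟩ := key C (fun n => ⟨(hrel n).2.2.2.2.1, (hrel n).2.2.2.2.2.1⟩)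
    (fun n => (hPn n).2.2.1.mem)
  obtain ⟨LD, hLDm, hLD⟩ := key D (fun n => ⟨(hrel n).2.2.2.2.2.2.1, (hrel n).2.2.2.2.2.2.2⟩)
    (fun n => (hPn n).2.2.2.1.mem)
  -- limit of F along the sequence
  have hterm : ∀ (K c : ℝ) (f : ℕ → ℝ) (L : ℝ), 0 < c → 0 ≤ L → Tendsto f atTop (𝓝 L) →
      Tendsto (fun n => K/(f n + c)) atTop (𝓝 (K/(L + c))) := by
    intro K c f L hc hL hf
    exact Tendsto.div tendsto_const_nhds (hf.add tendsto_const_nhds) (by positivity)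
  have hFlim : Tendsto (fun n => F (A n) (B n) (C n) (D n)) atTop (𝓝 (F LA LB LC LD)) := by
    have hLA0 : (0:ℝ) ≤ LA := (cantorSet_subset_unitInterval hLAm).1
    have hLB0 : (0:ℝ) ≤ LB := (cantorSet_subset_unitInterval hLBm).1
    have hLC0 : (0:ℝ) ≤ LC := (cantorSet_subset_unitInterval hLCm).1
    have hLD0 : (0:ℝ) ≤ LD := (cantorSet_subset_unitInterval hLDm).1
    simp only [F]
    exact (((hterm 27 6 A LA (by norm_num) hLA0 hLA).add
      (hterm 27 8 B LB (by norm_num) hLB0 hLB)).add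
      (hterm 3 2 C LC (by norm_num) hLC0 hLC)).add
      (hterm 3 2 D LD (by norm_num) hLD0 hLD)
  -- squeeze
  have hsq : Tendsto (fun n => F (A n) (B n) (C n) (D n)) atTop (𝓝 y) := by
    rw [tendsto_iff_dist_tendsto_zero]
    apply squeeze_zero (fun n => dist_nonneg) (g := fun n => 3 * (1/3:ℝ)^n)
    · intro n
      obtain ⟨pa, pb, pc, pd, hlo, hhi⟩ := hPn n
      have hw := Fwidth pa.lb pb.lb pc.lb pd.lb (hlpos n).le
      rw [Real.dist_eq, abs_le]
      constructor <;> simp only [hℓ] at hw ⊢ <;> [linarith; linarith]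
    · have := tendsto_pow_atTop_nhds_zero_of_lt_one (by norm_num : (0:ℝ) ≤ 1/3)
        (by norm_num : (1/3:ℝ) < 1)
      simpa using this.const_mul (3:ℝ)
  exact ⟨LA, hLAm, LB, hLBm, LC, hLCm, LD, hLDm, tendsto_nhds_unique hsq hFlim⟩

open Set


theorem four_reciprocals_cantorSet_supset_Icc_sixtytwo_sevenths_ten :
    Set.Icc (62 / 7 : ℝ) 10 ⊆
      {y : ℝ | ∃ x₁ ∈ cantorSet ∩ Set.Icc (6 / 27 : ℝ) (7 / 27),
        ∃ x₂ ∈ cantorSet ∩ Set.Icc (8 / 27 : ℝ) (1 / 3),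
        ∃ x₃ ∈ cantorSet ∩ Set.Icc (2 / 3 : ℝ) 1,
        ∃ x₄ ∈ cantorSet ∩ Set.Icc (2 / 3 : ℝ) 1,
        y = 1 / x₁ + 1 / x₂ + 1 / x₃ + 1 / x₄} := by
  intro y hy
  obtain ⟨A, hA, B, hB, C, hC, D, hD, hyF⟩ := exists_F_eq hy
  obtain ⟨hA0, hA1⟩ := cantorSet_subset_unitInterval hA
  obtain ⟨hB0, hB1⟩ := cantorSet_subset_unitInterval hB
  obtain ⟨hC0, hC1⟩ := cantorSet_subset_unitInterval hC
  obtain ⟨hD0, hD1⟩ := cantorSet_subset_unitInterval hD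
  refine ⟨(A+6)/27, ⟨?_, by constructor <;> linarith⟩,
    (B+8)/27, ⟨?_, by constructor <;> linarith⟩,
    (C+2)/3, ⟨third_add_mem_cantorSet hC, by constructor <;> linarith⟩,
    (D+2)/3, ⟨third_add_mem_cantorSet hD, by constructor <;> linarith⟩,
    ?_⟩
  · have h1 := third_mem_cantorSet (third_add_mem_cantorSet (third_mem_cantorSet hA))
    rw [show (A/3 + 2)/3/3 = (A+6)/27 by ring] at h1
    exact h1
  · have h1 := third_mem_cantorSet (third_add_mem_cantorSet (third_add_mem_cantorSet hB))
    rw [show ((B+2)/3 + 2)/3/3 = (B+8)/27 by ring] at h1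
    exact h1
  · rw [hyF]
    simp only [F, one_div_div]
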